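/- For the bivariate Gaussian copula C^r, the partial derivative of C^r(u,v) with respect to r at r = 0 equals φ(Φ⁻¹(u))·φ(Φ⁻¹(v)). -/

import Mathlib

open MeasureTheory Real

/-- Standard normal density. -/
noncomputable def stdPdf (x : ℝ) : ℝ := (Real.sqrt (2 * Real.pi))⁻¹ * Real.exp (-x ^ 2 / 2)

/-- Standard normal distribution function. -/
noncomputable def stdCdf (x : ℝ) : ℝ := ∫ t in Set.Iic x, stdPdf t

/-- Density of the bivariate standard normal with correlation `r`. -/
noncomputable def bivPdf (r : ℝ) (p : ℝ × ℝ) : ℝ :=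
  (2 * Real.pi * Real.sqrt (1 - r ^ 2))⁻¹ *
    Real.exp (-(p.1 ^ 2 + p.2 ^ 2 - 2 * r * p.1 * p.2) / (2 * (1 - r ^ 2)))

/-- The bivariate Gaussian copula `C^r(u,v) = P[Φ(X) ≤ u, Φ(Y) ≤ v]`. -/
noncomputable def gaussCopula (r : ℝ) (u v : ℝ) : ℝ :=
  ∫ p in {p : ℝ × ℝ | stdCdf p.1 ≤ u ∧ stdCdf p.2 ≤ v}, bivPdf r p

/- ### Auxiliary lemmas -/

noncomputable def bivPdf' (r : ℝ) (p : ℝ × ℝ) : ℝ :=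
  bivPdf r p * (r / (1 - r ^ 2) +
    (p.1 * p.2 * (1 - r ^ 2) - r * (p.1 ^ 2 + p.2 ^ 2 - 2 * r * p.1 * p.2)) / (1 - r ^ 2) ^ 2)

lemma stdPdf_pos (x : ℝ) : 0 < stdPdf x := by unfold stdPdf; positivity
lemma stdPdf_cont : Continuous stdPdf := by unfold stdPdf; fun_prop

lemma integrable_stdPdf : Integrable stdPdf := by
  have h := integrable_exp_neg_mul_sq (b := (1/2:ℝ)) (by norm_num)
  have : stdPdf = fun x => (Real.sqrt (2*Real.pi))⁻¹ * Real.exp (-(1/2) * x^2) := by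
    funext x; unfold stdPdf; ring_nf
  rw [this]; exact h.const_mul _

lemma stdCdf_strictMono : StrictMono stdCdf := by
  intro a b hab
  have h1 : ((∫ t in Set.Iic b, stdPdf t) - ∫ t in Set.Iic a, stdPdf t) = ∫ t in a..b, stdPdf t :=
    intervalIntegral.integral_Iic_sub_Iic integrable_stdPdf.integrableOn integrable_stdPdf.integrableOn
  have h2 : 0 < ∫ t in a..b, stdPdf t :=
    intervalIntegral.intervalIntegral_pos_of_pos
      (stdPdf_cont.intervalIntegrable a b) (fun t => stdPdf_pos t) hab
  have ha' : stdCdf a = ∫ t in Set.Iic a, stdPdf t := rfl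
  have hb' : stdCdf b = ∫ t in Set.Iic b, stdPdf t := rfl
  rw [ha', hb']
  linarith

lemma stdCdf_le_iff {a b : ℝ} : stdCdf a ≤ stdCdf b ↔ a ≤ b :=
  stdCdf_strictMono.le_iff_le

lemma hasDerivAt_bivPdf (p : ℝ × ℝ) {r : ℝ} (hr : r ^ 2 < 1) :
    HasDerivAt (fun r => bivPdf r p) (bivPdf' r p) r := by
  have h1 : (0:ℝ) < 1 - r ^ 2 := by linarith
  have hs : Real.sqrt (1 - r ^ 2) ≠ 0 := by positivity
  have hsq : Real.sqrt (1 - r ^ 2) ^ 2 = 1 - r ^ 2 := Real.sq_sqrt h1.le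
  have hpi : (0:ℝ) < Real.pi := Real.pi_pos
  have hq : HasDerivAt (fun r : ℝ => 1 - r ^ 2) (-(2 * r)) r := by
    simpa using ((hasDerivAt_pow 2 r).const_sub 1)
  have hsqrt : HasDerivAt (fun r : ℝ => Real.sqrt (1 - r ^ 2))
      (-(2 * r) / (2 * Real.sqrt (1 - r ^ 2))) r := hq.sqrt h1.ne'
  have hc : HasDerivAt (fun r : ℝ => (2 * Real.pi * Real.sqrt (1 - r ^ 2))⁻¹)
      (-(2 * Real.pi * (-(2 * r) / (2 * Real.sqrt (1 - r ^ 2)))) /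
        (2 * Real.pi * Real.sqrt (1 - r ^ 2)) ^ 2) r :=
    (hsqrt.const_mul (2 * Real.pi)).inv (by positivity)
  have hnum : HasDerivAt (fun r : ℝ => -(p.1 ^ 2 + p.2 ^ 2 - 2 * r * p.1 * p.2))
      (2 * p.1 * p.2) r := by
    have : HasDerivAt (fun r : ℝ => (2 * p.1 * p.2) * r - (p.1 ^ 2 + p.2 ^ 2))
        (2 * p.1 * p.2) r := by
      simpa using ((hasDerivAt_id r).const_mul (2 * p.1 * p.2)).sub_const (p.1 ^ 2 + p.2 ^ 2)
    convert this using 2 with r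
    ring
  have hden : HasDerivAt (fun r : ℝ => 2 * (1 - r ^ 2)) (2 * (-(2 * r))) r := hq.const_mul 2
  have hE : HasDerivAt (fun r : ℝ => -(p.1 ^ 2 + p.2 ^ 2 - 2 * r * p.1 * p.2) / (2 * (1 - r ^ 2)))
      ((2 * p.1 * p.2 * (2 * (1 - r ^ 2)) -
        -(p.1 ^ 2 + p.2 ^ 2 - 2 * r * p.1 * p.2) * (2 * (-(2 * r)))) / (2 * (1 - r ^ 2)) ^ 2) r :=
    hnum.div hden (by positivity)
  have hexp := hE.exp
  have := hc.mul hexp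
  refine this.congr_deriv ?_
  unfold bivPdf' bivPdf
  set S := Real.sqrt (1 - r ^ 2) with hS
  rw [← hsq]
  field_simp

lemma sqrt_two_pi_sq : (Real.sqrt (2 * Real.pi))⁻¹ * (Real.sqrt (2 * Real.pi))⁻¹ = (2 * Real.pi)⁻¹ := by
  rw [← mul_inv, Real.mul_self_sqrt (by positivity)]

lemma bivPdf_zero (p : ℝ × ℝ) : bivPdf 0 p = stdPdf p.1 * stdPdf p.2 := by
  have h2 : stdPdf p.1 * stdPdf p.2
      = (2 * Real.pi)⁻¹ * Real.exp (-p.1 ^ 2 / 2 + -p.2 ^ 2 / 2) := by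
    unfold stdPdf; rw [mul_mul_mul_comm, sqrt_two_pi_sq, ← Real.exp_add]
  rw [h2]
  unfold bivPdf
  rw [show (1:ℝ) - 0 ^ 2 = 1 by norm_num, Real.sqrt_one, mul_one]
  congr 1
  ring

lemma bivPdf'_zero (p : ℝ × ℝ) : bivPdf' 0 p = p.1 * p.2 * (stdPdf p.1 * stdPdf p.2) := by
  rw [bivPdf', bivPdf_zero]
  norm_num
  ring

set_option maxHeartbeats 2000000 in
lemma bivPdf'_bound (p : ℝ × ℝ) {r : ℝ} (hr : |r| < 1/2) :
    |bivPdf' r p| ≤ 24 * (Real.exp (-(1/8) * p.1 ^ 2) * Real.exp (-(1/8) * p.2 ^ 2)) := by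
  obtain ⟨a, b⟩ := p
  simp only [bivPdf', bivPdf]
  set s := a ^ 2 + b ^ 2 with hs
  set t := a * b with ht
  have hs0 : 0 ≤ s := by positivity
  have hts : 2 * |t| ≤ s := by
    have h1 : |t| = |a| * |b| := abs_mul a b
    nlinarith [sq_abs a, sq_abs b, sq_nonneg (|a| - |b|)]
  have hrabs : |r| ≤ 1/2 := hr.le
  have hr2 : r ^ 2 ≤ 1/4 := by nlinarith [sq_abs r, abs_nonneg r]
  have hd : (3:ℝ)/4 ≤ 1 - r ^ 2 := by linarith
  have hd1 : 1 - r ^ 2 ≤ 1 := by nlinarith [sq_nonneg r]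
  have hdpos : (0:ℝ) < 1 - r ^ 2 := by linarith
  have hrt : 2 * r * t ≤ s / 2 := by
    have h1 : 2 * r * t ≤ |2 * r * t| := le_abs_self _
    have h2 : |2 * r * t| = 2 * |r| * |t| := by rw [abs_mul, abs_mul]; norm_num
    nlinarith [abs_nonneg t]
  have hS : (1:ℝ)/2 ≤ Real.sqrt (1 - r ^ 2) := by
    have : Real.sqrt ((1:ℝ)/4) ≤ Real.sqrt (1 - r ^ 2) := Real.sqrt_le_sqrt (by linarith)
    have h4 : Real.sqrt ((1:ℝ)/4) = 1/2 := by
      rw [show (1:ℝ)/4 = (1/2)^2 by norm_num, Real.sqrt_sq (by norm_num : (0:ℝ) ≤ 1/2)]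
    linarith
  have hc : (2 * Real.pi * Real.sqrt (1 - r ^ 2))⁻¹ ≤ 1 := by
    rw [inv_le_one_iff₀]
    right
    nlinarith [Real.pi_gt_three]
  have hcpos : 0 < (2 * Real.pi * Real.sqrt (1 - r ^ 2))⁻¹ := by
    have h0 : 0 < Real.sqrt (1 - r ^ 2) := by linarith
    positivity
  have hE : -(s - 2 * r * t) / (2 * (1 - r ^ 2)) ≤ -s/4 := by
    rw [div_le_div_iff₀ (by linarith) (by norm_num)]
    nlinarith
  have hexp : Real.exp (-(s - 2 * r * t) / (2 * (1 - r ^ 2))) ≤ Real.exp (-s/4) :=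
    Real.exp_le_exp.mpr hE
  have hfac : |r / (1 - r ^ 2) + (t * (1 - r ^ 2) - r * (s - 2 * r * t)) / (1 - r ^ 2) ^ 2|
      ≤ 1 + 3 * s := by
    have heq : r / (1 - r ^ 2) + (t * (1 - r ^ 2) - r * (s - 2 * r * t)) / (1 - r ^ 2) ^ 2
        = (r * (1 - r ^ 2) + t * (1 - r ^ 2) - r * (s - 2 * r * t)) / (1 - r ^ 2) ^ 2 := by
      field_simp
      ring
    rw [heq, abs_div, abs_of_pos (by positivity : (0:ℝ) < (1 - r ^ 2) ^ 2),
      div_le_iff₀ (by positivity)]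
    have h1 : |r * (1 - r ^ 2)| ≤ 1/2 := by
      rw [abs_mul, abs_of_pos hdpos]; nlinarith [abs_nonneg r]
    have h2 : |t * (1 - r ^ 2)| ≤ s / 2 := by
      rw [abs_mul, abs_of_pos hdpos]; nlinarith [abs_nonneg t]
    have h3 : |r * (s - 2 * r * t)| ≤ 3 * s / 4 := by
      rw [abs_mul]
      have h4 : |s - 2 * r * t| ≤ 3 * s / 2 := by
        have habs : |2 * r * t| ≤ s / 2 := by
          have h7 : |2 * r * t| = 2 * |r| * |t| := by rw [abs_mul, abs_mul]; norm_num
          nlinarith [abs_nonneg t]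
        have h8 : |s - 2 * r * t| ≤ |s| + |2 * r * t| := abs_sub s (2 * r * t)
        rw [abs_of_nonneg hs0] at h8
        linarith
      nlinarith [abs_nonneg r, abs_nonneg (s - 2 * r * t)]
    have hN : |r * (1 - r ^ 2) + t * (1 - r ^ 2) - r * (s - 2 * r * t)| ≤ 1/2 + 5 * s / 4 := by
      have t1 : |r * (1 - r ^ 2) + t * (1 - r ^ 2) - r * (s - 2 * r * t)|
          ≤ |r * (1 - r ^ 2) + t * (1 - r ^ 2)| + |r * (s - 2 * r * t)| :=
        abs_sub (r * (1 - r ^ 2) + t * (1 - r ^ 2)) (r * (s - 2 * r * t))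
      have t2 : |r * (1 - r ^ 2) + t * (1 - r ^ 2)| ≤ |r * (1 - r ^ 2)| + |t * (1 - r ^ 2)| :=
        abs_add_le _ _
      linarith
    nlinarith [sq_nonneg r, sq_nonneg (r ^ 2)]
  have hpoly : 1 + 3 * s ≤ 24 * Real.exp (s/8) := by
    have h8 := Real.add_one_le_exp (s/8)
    nlinarith [Real.exp_pos (s/8)]
  have key : |(2 * Real.pi * Real.sqrt (1 - r ^ 2))⁻¹ *
        Real.exp (-(a ^ 2 + b ^ 2 - 2 * r * a * b) / (2 * (1 - r ^ 2))) *
      (r / (1 - r ^ 2) + (a * b * (1 - r ^ 2) - r * (a ^ 2 + b ^ 2 - 2 * r * a * b)) /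
        (1 - r ^ 2) ^ 2)| ≤ Real.exp (-s/4) * (1 + 3 * s) := by
    rw [abs_mul]
    have hA : |(2 * Real.pi * Real.sqrt (1 - r ^ 2))⁻¹ *
        Real.exp (-(a ^ 2 + b ^ 2 - 2 * r * a * b) / (2 * (1 - r ^ 2)))| ≤ Real.exp (-s/4) := by
      rw [abs_mul, abs_of_pos hcpos, abs_of_pos (Real.exp_pos _)]
      have e1 : Real.exp (-(a ^ 2 + b ^ 2 - 2 * r * a * b) / (2 * (1 - r ^ 2)))
          = Real.exp (-(s - 2 * r * t) / (2 * (1 - r ^ 2))) := by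
        congr 1; rw [hs, ht]; ring
      rw [e1]
      calc (2 * Real.pi * Real.sqrt (1 - r ^ 2))⁻¹ * Real.exp (-(s - 2 * r * t) / (2 * (1 - r ^ 2)))
          ≤ 1 * Real.exp (-(s - 2 * r * t) / (2 * (1 - r ^ 2))) :=
            mul_le_mul_of_nonneg_right hc (Real.exp_pos _).le
        _ = Real.exp (-(s - 2 * r * t) / (2 * (1 - r ^ 2))) := one_mul _
        _ ≤ Real.exp (-s/4) := hexp
    have hB : |r / (1 - r ^ 2) + (a * b * (1 - r ^ 2) - r * (a ^ 2 + b ^ 2 - 2 * r * a * b)) /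
        (1 - r ^ 2) ^ 2| ≤ 1 + 3 * s := by
      have e2 : a * b * (1 - r ^ 2) - r * (a ^ 2 + b ^ 2 - 2 * r * a * b)
          = t * (1 - r ^ 2) - r * (s - 2 * r * t) := by rw [hs, ht]; ring
      rw [e2]
      exact hfac
    exact mul_le_mul hA hB (abs_nonneg _) (Real.exp_pos _).le
  calc _ ≤ Real.exp (-s/4) * (1 + 3 * s) := key
    _ ≤ Real.exp (-s/4) * (24 * Real.exp (s/8)) :=
        mul_le_mul_of_nonneg_left hpoly (Real.exp_pos _).le
    _ = 24 * (Real.exp (-(1/8) * a ^ 2) * Real.exp (-(1/8) * b ^ 2)) := by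
        rw [mul_left_comm, ← Real.exp_add, ← Real.exp_add]
        congr 2
        rw [hs]; ring

lemma hasDerivAt_neg_stdPdf (t : ℝ) : HasDerivAt (fun u => -stdPdf u) (t * stdPdf t) t := by
  unfold stdPdf
  have h1 : HasDerivAt (fun u : ℝ => -u ^ 2 / 2) (-t) t := by
    have := (hasDerivAt_pow 2 t).neg.div_const 2
    simpa using this.congr_deriv (by push_cast; ring)
  have h2 := (h1.exp.const_mul (Real.sqrt (2 * Real.pi))⁻¹).neg
  refine h2.congr_deriv ?_
  ring

lemma integrable_mul_stdPdf : Integrable (fun t => t * stdPdf t) := by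
  have h := integrable_mul_exp_neg_mul_sq (b := (1/2:ℝ)) (by norm_num)
  have : (fun t => t * stdPdf t)
      = fun t => (Real.sqrt (2 * Real.pi))⁻¹ * (t * Real.exp (-(1/2) * t ^ 2)) := by
    funext t; unfold stdPdf; ring_nf
  rw [this]
  exact h.const_mul _

lemma tendsto_neg_stdPdf_atBot : Filter.Tendsto (fun t => -stdPdf t) Filter.atBot (nhds 0) := by
  have h1 : Filter.Tendsto (fun t : ℝ => t ^ 2) Filter.atBot Filter.atTop := by
    have ha : Filter.Tendsto (abs : ℝ → ℝ) Filter.atBot Filter.atTop :=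
      Filter.tendsto_abs_atBot_atTop
    have hp : Filter.Tendsto (fun x : ℝ => x ^ 2) Filter.atTop Filter.atTop :=
      Filter.tendsto_pow_atTop (two_ne_zero)
    have hc := hp.comp ha
    refine hc.congr fun t => ?_
    simp [Function.comp, sq_abs]
  have h2 : Filter.Tendsto (fun t : ℝ => -t ^ 2 / 2) Filter.atBot Filter.atBot := by
    apply Filter.Tendsto.atBot_div_const (by norm_num : (0:ℝ) < 2)
    exact Filter.tendsto_neg_atTop_atBot.comp h1
  have h3 : Filter.Tendsto (fun t : ℝ => Real.exp (-t ^ 2 / 2)) Filter.atBot (nhds 0) :=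
    Real.tendsto_exp_atBot.comp h2
  have h4 := (h3.const_mul (Real.sqrt (2 * Real.pi))⁻¹).neg
  simpa [stdPdf] using h4

lemma integral_Iic_mul_stdPdf (x : ℝ) : ∫ t in Set.Iic x, t * stdPdf t = -stdPdf x := by
  have h := integral_Iic_of_hasDerivAt_of_tendsto
    (f := fun u => -stdPdf u) (f' := fun t => t * stdPdf t) (a := x) (m := 0)
    (by exact ((continuous_neg.comp (by unfold stdPdf; fun_prop)).continuousWithinAt))
    (fun t _ => hasDerivAt_neg_stdPdf t)
    integrable_mul_stdPdf.integrableOn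
    tendsto_neg_stdPdf_atBot
  simpa using h

lemma bivPdf_continuous (r : ℝ) : Continuous (bivPdf r) := by
  unfold bivPdf; fun_prop

lemma bivPdf'_continuous (r : ℝ) : Continuous (bivPdf' r) := by
  unfold bivPdf' bivPdf; fun_prop

/-- The partial derivative of the Gaussian copula `C^r(u,v)` with respect to `r` at `r = 0`
equals `φ(Φ⁻¹(u)) φ(Φ⁻¹(v))`; here `u = Φ(x)` and `v = Φ(y)` range over `(0,1)`. -/
theorem stmt_18 (x y : ℝ) :
    HasDerivAt (fun r => gaussCopula r (stdCdf x) (stdCdf y)) (stdPdf x * stdPdf y) 0 := by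
  have hset : {p : ℝ × ℝ | stdCdf p.1 ≤ stdCdf x ∧ stdCdf p.2 ≤ stdCdf y}
      = Set.Iic x ×ˢ Set.Iic y := by
    ext p
    simp [Set.mem_prod, stdCdf_le_iff, Set.mem_Iic, Prod.le_def]
  have hfun : (fun r => gaussCopula r (stdCdf x) (stdCdf y))
      = fun r => ∫ p in Set.Iic x ×ˢ Set.Iic y, bivPdf r p := by
    funext r
    unfold gaussCopula
    rw [hset]
  rw [hfun]
  set μ : Measure (ℝ × ℝ) := volume.restrict (Set.Iic x ×ˢ Set.Iic y) with hμ
  have hμprod : μ = (volume.restrict (Set.Iic x)).prod (volume.restrict (Set.Iic y)) := by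
    rw [hμ, Measure.volume_eq_prod, Measure.prod_restrict]
  -- integrability of bivPdf 0
  have hint : Integrable (bivPdf 0) μ := by
    have hglob : Integrable (bivPdf 0) (volume : Measure (ℝ × ℝ)) := by
      have he : bivPdf 0 = fun p : ℝ × ℝ => stdPdf p.1 * stdPdf p.2 := funext bivPdf_zero
      rw [he, Measure.volume_eq_prod]
      exact integrable_stdPdf.mul_prod integrable_stdPdf
    exact hglob.restrict
  -- integrability of the bound
  have hbint : Integrable
      (fun p : ℝ × ℝ => 24 * (Real.exp (-(1/8) * p.1 ^ 2) * Real.exp (-(1/8) * p.2 ^ 2))) μ := by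
    have hglob : Integrable
        (fun p : ℝ × ℝ => 24 * (Real.exp (-(1/8) * p.1 ^ 2) * Real.exp (-(1/8) * p.2 ^ 2)))
        (volume : Measure (ℝ × ℝ)) := by
      rw [Measure.volume_eq_prod]
      exact (Integrable.mul_prod (integrable_exp_neg_mul_sq (by norm_num : (0:ℝ) < 1/8))
        (integrable_exp_neg_mul_sq (by norm_num : (0:ℝ) < 1/8))).const_mul 24
    exact hglob.restrict
  have main := hasDerivAt_integral_of_dominated_loc_of_deriv_le
    (F := fun r (p : ℝ × ℝ) => bivPdf r p) (F' := fun r (p : ℝ × ℝ) => bivPdf' r p)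
    (x₀ := (0:ℝ)) (μ := μ)
    (bound := fun p : ℝ × ℝ => 24 * (Real.exp (-(1/8) * p.1 ^ 2) * Real.exp (-(1/8) * p.2 ^ 2)))
    (s := Metric.ball (0:ℝ) (1/2)) (Metric.ball_mem_nhds _ (by norm_num))
    (Filter.Eventually.of_forall fun r => ((bivPdf_continuous r).aestronglyMeasurable).restrict)
    hint
    ((bivPdf'_continuous 0).aestronglyMeasurable.restrict)
    (Filter.Eventually.of_forall fun p => by
      intro r hr
      rw [Real.norm_eq_abs]
      exact bivPdf'_bound p (by simpa [Real.dist_eq] using hr))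
    hbint
    (Filter.Eventually.of_forall fun p => by
      intro r hr
      have h1 : |r| < 1/2 := by simpa [Real.dist_eq] using hr
      have h2 : r ^ 2 < 1 := by nlinarith [sq_abs r, abs_nonneg r]
      exact hasDerivAt_bivPdf p h2)
  obtain ⟨-, hd⟩ := main
  have hval : ∫ p, bivPdf' 0 p ∂μ = stdPdf x * stdPdf y := by
    have he : ∀ p : ℝ × ℝ, bivPdf' 0 p = (p.1 * stdPdf p.1) * (p.2 * stdPdf p.2) := by
      intro p; rw [bivPdf'_zero]; ring
    calc ∫ p, bivPdf' 0 p ∂μ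
        = ∫ p : ℝ × ℝ, (p.1 * stdPdf p.1) * (p.2 * stdPdf p.2) ∂μ := by
          exact integral_congr_ae (Filter.Eventually.of_forall he)
      _ = (∫ a in Set.Iic x, a * stdPdf a) * ∫ b in Set.Iic y, b * stdPdf b := by
          rw [hμprod]
          exact integral_prod_mul (fun a => a * stdPdf a) (fun b => b * stdPdf b)
      _ = (-stdPdf x) * (-stdPdf y) := by
          rw [integral_Iic_mul_stdPdf, integral_Iic_mul_stdPdf]
      _ = stdPdf x * stdPdf y := by ring
  rw [← hval]
  exact hd
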